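/- Let μ_S > 0, τ > 0, Λ > 0 and define M_S^per(t) := τΛ·e^{−μ_S(t − ⌊t/τ⌋τ)}/(1 − e^{−μ_Sτ}) for t ≥ 0. Then the mean value of 1/M_S^per over one period satisfies (1/τ)·∫_0^τ (1/M_S^per(t)) dt = 2(cosh(μ_Sτ) − 1)/(μ_S τ² Λ). -/

import Mathlib

open MeasureTheory

/-- The periodic sterile male population resulting from periodic impulsive releases. -/
noncomputable def MSper (μS τ Λ t : ℝ) : ℝ :=
  τ * Λ * Real.exp (-(μS * (t - (⌊t / τ⌋ : ℝ) * τ))) / (1 - Real.exp (-(μS * τ)))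

theorem stmt_8 (μS τ Λ : ℝ) (hμS : 0 < μS) (hτ : 0 < τ) (hΛ : 0 < Λ) :
    (1 / τ) * ∫ t in (0:ℝ)..τ, 1 / MSper μS τ Λ t =
      2 * (Real.cosh (μS * τ) - 1) / (μS * τ ^ 2 * Λ) := by
  have hE : Real.exp (-(μS * τ)) < 1 := by
    rw [Real.exp_lt_one_iff]
    nlinarith
  have h1 : (1 : ℝ) - Real.exp (-(μS * τ)) ≠ 0 := by linarith
  have hcongr : ∫ t in (0:ℝ)..τ, 1 / MSper μS τ Λ t =
      ∫ t in (0:ℝ)..τ, (1 - Real.exp (-(μS * τ))) / (τ * Λ) * Real.exp (μS * t) := by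
    apply intervalIntegral.integral_congr_ae
    have hne : ∀ᵐ t : ℝ, t ≠ τ := by
      rw [MeasureTheory.ae_iff]
      simp
    filter_upwards [hne] with t ht htI
    rw [Set.uIoc_of_le hτ.le] at htI
    have htlt : t < τ := lt_of_le_of_ne htI.2 ht
    have hfl : ⌊t / τ⌋ = 0 := by
      apply Int.floor_eq_zero_iff.2
      exact ⟨div_nonneg htI.1.le hτ.le, (div_lt_one hτ).2 htlt⟩
    rw [MSper, hfl]
    push_cast
    rw [zero_mul, sub_zero, Real.exp_neg]
    field_simp
  rw [hcongr, intervalIntegral.integral_const_mul]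
  have hint : ∫ t in (0:ℝ)..τ, Real.exp (μS * t) =
      (Real.exp (μS * τ) - 1) / μS := by
    have := intervalIntegral.integral_comp_mul_left (fun x => Real.exp x) (c := μS) hμS.ne'
      (a := 0) (b := τ)
    simp only [mul_zero] at this
    rw [this, integral_exp, Real.exp_zero, smul_eq_mul]
    field_simp
  rw [hint, Real.cosh_eq]
  rw [Real.exp_neg]
  have he : Real.exp (μS * τ) > 0 := Real.exp_pos _
  field_simp
  ring
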